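/- Let a and b be positive real numbers satisfying 2a⁵ + 3a⁴b + a³b² − 5a² − 5ab − b² = 0 and −a⁴b − a³b² + a²b³ − a² + ab⁴ − ab + b² = 0. Then b, viewed as a complex number, does not lie in solvableByRad ℚ ℂ; that is, the coordinates of the collinear Fruchterman–Reingold equilibrium of the path on four vertices cannot be expressed by nested radicals. -/

import Mathlib

open Polynomial

namespace FRPath

instance : Fact (Nat.Prime 11) := ⟨by norm_num⟩

/-- The quintic `X^5 - 48X^4 + 1008X^3 - 10764X^2 + 38880X + 11664` over `ℤ`. -/
noncomputable def PZ : ℤ[X] :=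
  X ^ 5 - C 48 * X ^ 4 + C 1008 * X ^ 3 - C 10764 * X ^ 2 + C 38880 * X + C 11664

/-- The same quintic over `ℚ`. -/
noncomputable def Pq : ℚ[X] :=
  X ^ 5 - 48 * X ^ 4 + 1008 * X ^ 3 - 10764 * X ^ 2 + 38880 * X + 11664

/-- Its reduction mod 11. -/
noncomputable def Pb : (ZMod 11)[X] :=
  X ^ 5 + C 7 * X ^ 4 + C 7 * X ^ 3 + C 5 * X ^ 2 + C 6 * X + C 4

lemma monic_PZ : PZ.Monic := by unfold PZ; monicity!
lemma monic_Pq : Pq.Monic := by unfold Pq; monicity!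
lemma monic_Pb : Pb.Monic := by unfold Pb; monicity!
lemma natDegree_Pq : Pq.natDegree = 5 := by unfold Pq; compute_degree!
lemma natDegree_Pb : Pb.natDegree = 5 := by unfold Pb; compute_degree!
lemma Pb_ne_one : Pb ≠ 1 := fun h => by simpa [h] using natDegree_Pb

lemma PZ_map_Pb : PZ.map (Int.castRingHom (ZMod 11)) = Pb := by
  simp only [PZ, Pb, Polynomial.map_add, Polynomial.map_sub, Polynomial.map_mul,
    Polynomial.map_pow, map_X, map_C]
  norm_num
  rw [show ((48 : ZMod 11)) = -7 by decide, show ((1008 : ZMod 11)) = 7 by decide,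
    show ((10764 : ZMod 11)) = -5 by decide, show ((38880 : ZMod 11)) = 6 by decide,
    show ((11664 : ZMod 11)) = 4 by decide]
  rw [show (C (-7 : ZMod 11)) = -C 7 by simp, show (C (-5 : ZMod 11)) = -C 5 by simp]
  ring

lemma PZ_map_Pq : PZ.map (Int.castRingHom ℚ) = Pq := by
  simp only [PZ, Pq, Polynomial.map_add, Polynomial.map_sub, Polynomial.map_mul,
    Polynomial.map_pow, map_X, map_C, map_ofNat]
  norm_num

lemma noroot_Pb : ∀ x : ZMod 11, x ^ 5 + 7 * x ^ 4 + 7 * x ^ 3 + 5 * x ^ 2 + 6 * x + 4 ≠ 0 := by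
  decide

lemma no_quad (u v : ZMod 11) :
    ¬ (v * (7 - v - u * (7 - u)) + u * (5 - v * (7 - u) - u * (7 - v - u * (7 - u))) = 6 ∧
       v * (5 - v * (7 - u) - u * (7 - v - u * (7 - u))) = 4) := by
  revert u v; decide

lemma irr_Pb : Irreducible Pb := by
  rw [monic_Pb.irreducible_iff_lt_natDegree_lt Pb_ne_one]
  rintro q hq hmem ⟨g, hfact⟩
  rw [natDegree_Pb] at hmem
  have hg : g.Monic := hq.of_mul_monic_left (hfact ▸ monic_Pb)
  have hdeg : q.natDegree + g.natDegree = 5 := by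
    rw [← hq.natDegree_mul hg, ← hfact, natDegree_Pb]
  obtain ⟨hd1, hd2⟩ := Finset.mem_Ioc.mp hmem
  interval_cases hd : q.natDegree
  · -- linear factor
    have hqe : q = X + C (q.coeff 0) := hq.eq_X_add_C hd
    have : Pb.IsRoot (-(q.coeff 0)) := by
      have : (X - C (-(q.coeff 0))) ∣ Pb := by
        rw [map_neg, sub_neg_eq_add, ← hqe]
        exact ⟨g, hfact⟩
      exact (dvd_iff_isRoot).mp this
    rw [IsRoot, Pb] at this
    simp only [eval_add, eval_mul, eval_pow, eval_X, eval_C] at this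
    exact noroot_Pb _ this
  · -- quadratic factor
    have hgd : g.natDegree = 3 := by omega
    have hqe : q = X ^ 2 + C (q.coeff 1) * X + C (q.coeff 0) := by
      ext n
      rcases n with _ | _ | _ | n
      · simp
      · simp
      · simpa [coeff_X_pow, coeff_C] using (hd ▸ hq.coeff_natDegree : q.coeff 2 = 1)
      · rw [coeff_eq_zero_of_natDegree_lt (by omega)]
        simp [coeff_X_pow, coeff_C]
    have hge : g = X ^ 3 + C (g.coeff 2) * X ^ 2 + C (g.coeff 1) * X + C (g.coeff 0) := by
      ext n
      rcases n with _ | _ | _ | _ | n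
      · simp
      · simp
      · simp [coeff_X_pow, coeff_C]
      · simpa [coeff_X_pow, coeff_C] using (hgd ▸ hg.coeff_natDegree : g.coeff 3 = 1)
      · rw [coeff_eq_zero_of_natDegree_lt (by omega)]
        simp [coeff_X_pow, coeff_C]
    set u := q.coeff 1
    set v := q.coeff 0
    set a2 := g.coeff 2
    set a1 := g.coeff 1
    set a0 := g.coeff 0
    have hexp : Pb = X ^ 5 + C (u + a2) * X ^ 4 + C (v + u * a2 + a1) * X ^ 3 +
        C (v * a2 + u * a1 + a0) * X ^ 2 + C (v * a1 + u * a0) * X + C (v * a0) := by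
      rw [hfact, hqe, hge]; simp only [C_add, C_mul]; ring
    have e4 : u + a2 = 7 := by
      have h := congrArg (fun p => coeff p 4) hexp
      simp only [Pb, coeff_add, coeff_C_mul, coeff_X_pow, coeff_C, coeff_X] at h
      norm_num at h
      exact h.symm
    have e3 : v + u * a2 + a1 = 7 := by
      have h := congrArg (fun p => coeff p 3) hexp
      simp only [Pb, coeff_add, coeff_C_mul, coeff_X_pow, coeff_C, coeff_X] at h
      norm_num at h
      exact h.symm
    have e2 : v * a2 + u * a1 + a0 = 5 := by
      have h := congrArg (fun p => coeff p 2) hexp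
      simp only [Pb, coeff_add, coeff_C_mul, coeff_X_pow, coeff_C, coeff_X] at h
      norm_num at h
      exact h.symm
    have e1 : v * a1 + u * a0 = 6 := by
      have h := congrArg (fun p => coeff p 1) hexp
      simp only [Pb, coeff_add, coeff_C_mul, coeff_X_pow, coeff_C, coeff_X] at h
      norm_num at h
      exact h.symm
    have e0 : v * a0 = 4 := by
      have h := congrArg (fun p => coeff p 0) hexp
      simp only [Pb, coeff_add, coeff_C_mul, coeff_X_pow, coeff_C, coeff_X] at h
      norm_num at h
      exact h.symm
    have ha2 : a2 = 7 - u := by linear_combination e4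
    have ha1 : a1 = 7 - v - u * (7 - u) := by rw [ha2] at e3; linear_combination e3
    have ha0 : a0 = 5 - v * (7 - u) - u * (7 - v - u * (7 - u)) := by
      rw [ha2, ha1] at e2; linear_combination e2
    rw [ha1, ha0] at e1
    rw [ha0] at e0
    exact no_quad u v ⟨e1, e0⟩

lemma irr_PZ : Irreducible PZ :=
  monic_PZ.irreducible_of_irreducible_map (Int.castRingHom (ZMod 11)) _ (PZ_map_Pb ▸ irr_Pb)

lemma irr_Pq : Irreducible Pq := by
  rw [← PZ_map_Pq]
  exact (IsPrimitive.Int.irreducible_iff_irreducible_map_cast monic_PZ.isPrimitive).mp irr_PZ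

attribute [local instance] Polynomial.Gal.splits_ℚ_ℂ

lemma deriv3 : derivative (derivative (derivative Pq)) = 60 * X ^ 2 - 1152 * X + 6048 := by
  simp only [Pq, derivative_add, derivative_sub, derivative_mul, derivative_X,
    derivative_X_pow, derivative_ofNat]
  ring_nf
  norm_num [map_ofNat]
  ring

lemma card_rootSet_deriv3 :
    Fintype.card ((derivative (derivative (derivative Pq))).rootSet ℝ) = 0 := by
  rw [Fintype.card_eq_zero_iff]
  refine ⟨fun x => ?_⟩
  obtain ⟨-, hx⟩ := mem_rootSet.mp x.2
  have hx' : (aeval (x : ℝ)) ((60 : ℚ[X]) * X ^ 2 - 1152 * X + 6048) = 0 := by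
    rw [← deriv3]; exact hx
  simp only [map_add, map_sub, map_mul, map_ofNat, aeval_X, map_pow] at hx'
  nlinarith [sq_nonneg ((5 : ℝ) * x - 48), hx']

lemma real_roots_le : Fintype.card (Pq.rootSet ℝ) ≤ 3 := by
  have h1 := Polynomial.card_rootSet_le_derivative Pq
  have h2 := Polynomial.card_rootSet_le_derivative (derivative Pq)
  have h3 := Polynomial.card_rootSet_le_derivative (derivative (derivative Pq))
  rw [card_rootSet_deriv3] at h3
  omega

lemma aeval_Pq (x : ℝ) : aeval x Pq =
    x ^ 5 - 48 * x ^ 4 + 1008 * x ^ 3 - 10764 * x ^ 2 + 38880 * x + 11664 := by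
  simp [Pq, map_ofNat]

lemma real_roots_ge : 2 ≤ Fintype.card (Pq.rootSet ℝ) := by
  have hne : Pq ≠ 0 := monic_Pq.ne_zero
  set f : ℝ → ℝ := fun x => aeval x Pq with hf
  have hc : ∀ s : Set ℝ, ContinuousOn f s := fun s => Pq.continuousOn_aeval
  have h7 : 0 ≤ f 7 := by rw [hf]; simp only [aeval_Pq]; norm_num
  have h8 : f 8 < 0 := by rw [hf]; simp only [aeval_Pq]; norm_num
  have h19 : f 19 < 0 := by rw [hf]; simp only [aeval_Pq]; norm_num
  have h20 : 0 ≤ f 20 := by rw [hf]; simp only [aeval_Pq]; norm_num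
  obtain ⟨x, hx1, hx2⟩ := intermediate_value_Ico' (by norm_num : (7:ℝ) ≤ 8) (hc _)
    (Set.mem_Ioc.mpr ⟨h8, h7⟩)
  obtain ⟨y, hy1, hy2⟩ := intermediate_value_Ioc (by norm_num : (19:ℝ) ≤ 20) (hc _)
    (Set.mem_Ioc.mpr ⟨h19, h20⟩)
  have hxy : x ≠ y := by
    have : x < 8 := hx1.2
    have : 19 < y := hy1.1
    linarith
  have key : ↑({x, y} : Finset ℝ) ⊆ Pq.rootSet ℝ := by
    simp [Set.insert_subset_iff, mem_rootSet_of_ne hne, hx2, hy2]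
    exact ⟨hx2, hy2⟩
  convert Fintype.card_le_of_embedding (Set.embeddingOfSubset _ _ key)
  simp only [Finset.coe_sort_coe, Fintype.card_coe, Finset.card_singleton,
    Finset.card_insert_of_notMem (mt Finset.mem_singleton.mp hxy)]

lemma complex_roots_Pq : Fintype.card (Pq.rootSet ℂ) = 5 :=
  (card_rootSet_eq_natDegree irr_Pq.separable (IsAlgClosed.splits _)).trans natDegree_Pq

lemma gal_Pq : Function.Bijective (Polynomial.Gal.galActionHom Pq ℂ) := by
  apply Polynomial.Gal.galActionHom_bijective_of_prime_degree' irr_Pq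
  · rw [natDegree_Pq]; norm_num
  · rw [complex_roots_Pq]
    have := real_roots_le
    omega
  · rw [complex_roots_Pq]
    have := real_roots_ge
    omega

lemma not_solvable_Pq (x : ℂ) (hx : aeval x Pq = 0) : x ∉ solvableByRad ℚ ℂ := by
  intro hmem
  have hsolv := solvableByRad.isSolvable' hmem irr_Pq hx
  refine Equiv.Perm.not_solvable _ (le_of_eq ?_)
    (solvable_of_surjective gal_Pq.2)
  rw_mod_cast [Cardinal.mk_fintype, complex_roots_Pq]

lemma aeval_Pq_C (x : ℂ) : aeval x Pq =
    x ^ 5 - 48 * x ^ 4 + 1008 * x ^ 3 - 10764 * x ^ 2 + 38880 * x + 11664 := by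
  simp [Pq, map_ofNat]

end FRPath

open FRPath in
/-- If positive reals `a`, `b` satisfy the two Fruchterman–Reingold equilibrium equations
for the collinear drawing of the path on four vertices, then `b` (as a complex number) is
not expressible by nested radicals over `ℚ`. -/
theorem fr_path_equilibrium_not_solvableByRad (a b : ℝ) (ha : 0 < a) (hb : 0 < b)
    (h1 : 2 * a ^ 5 + 3 * a ^ 4 * b + a ^ 3 * b ^ 2 - 5 * a ^ 2 - 5 * a * b - b ^ 2 = 0)
    (h2 : -a ^ 4 * b - a ^ 3 * b ^ 2 + a ^ 2 * b ^ 3 - a ^ 2 + a * b ^ 4 - a * b + b ^ 2 = 0) :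
    (b : ℂ) ∉ solvableByRad ℚ ℂ := by
  intro hmem
  have hb0 : b ≠ 0 := ne_of_gt hb
  have key : b ^ 4 * (3 * b ^ 15 - 48 * b ^ 12 + 336 * b ^ 9 - 1196 * b ^ 6
      + 1440 * b ^ 3 + 144) = 0 := by
    linear_combination
      (-(24 * b ^ 2 + 212 * b ^ 5 - 432 * b ^ 8 + 190 * b ^ 11 - 27 * b ^ 14 + 3 * b ^ 17)
        - (16 * b ^ 4 + 88 * b ^ 7 - 52 * b ^ 10 - 8 * b ^ 13 + 6 * b ^ 16) * a
        - (24 * b ^ 3 + 212 * b ^ 6 - 104 * b ^ 9 + 14 * b ^ 12 - 3 * b ^ 15) * a ^ 2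
        - (16 * b ^ 5 - 8 * b ^ 8 + 16 * b ^ 11 - 6 * b ^ 14) * a ^ 3) * h1 +
      (-(-120 * b ^ 2 - 1228 * b ^ 5 + 764 * b ^ 8 - 146 * b ^ 11 + 21 * b ^ 14)
        - (-32 * b ^ 4 - 80 * b ^ 7 - 12 * b ^ 10 + 24 * b ^ 13) * a
        - (24 * b ^ 3 + 436 * b ^ 6 - 256 * b ^ 9 + 42 * b ^ 12 - 3 * b ^ 15) * a ^ 2
        - (48 * b ^ 2 + 440 * b ^ 5 - 216 * b ^ 8 + 44 * b ^ 11 - 12 * b ^ 14) * a ^ 3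
        - (32 * b ^ 4 - 16 * b ^ 7 + 32 * b ^ 10 - 12 * b ^ 13) * a ^ 4) * h2
  have hq : 3 * b ^ 15 - 48 * b ^ 12 + 336 * b ^ 9 - 1196 * b ^ 6 + 1440 * b ^ 3 + 144 = 0 := by
    rcases mul_eq_zero.mp key with h | h
    · exact absurd h (pow_ne_zero 4 hb0)
    · exact h
  have hqc : 3 * (b : ℂ) ^ 15 - 48 * (b : ℂ) ^ 12 + 336 * (b : ℂ) ^ 9 - 1196 * (b : ℂ) ^ 6
      + 1440 * (b : ℂ) ^ 3 + 144 = 0 := by exact_mod_cast congrArg (fun t : ℝ => (t : ℂ)) hq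
  have hs : aeval (3 * (b : ℂ) ^ 3) Pq = 0 := by
    rw [aeval_Pq_C]
    linear_combination 81 * hqc
  have hsmem : (3 * (b : ℂ) ^ 3) ∈ solvableByRad ℚ ℂ := by
    refine mul_mem ?_ (pow_mem hmem 3)
    simpa using (solvableByRad ℚ ℂ).algebraMap_mem (3 : ℚ)
  exact not_solvable_Pq _ hs hsmem
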